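/- Let q_1, q_2 : [0,2π)^ν → ℝ be bounded measurable with η ≤ q_k(x) ≤ M a.e. for some 0 < η ≤ M, set r_k := q_k/(1 + q_k), and define ψ(t) := −(2π)^{−ν} ∫_{[0,2π)^ν} log[ (1 + q_1(x))^t (1 + q_2(x))^{1−t} − q_1(x)^t q_2(x)^{1−t} ] dx for t ∈ [0,1]. Then the one-sided derivatives of ψ at the endpoints exist and are given by ∂⁻ψ(1) = (2π)^{−ν} ∫ (1 + q_1(x)) S_2( r_1(x) ‖ r_2(x) ) dx and ∂⁺ψ(0) = −(2π)^{−ν} ∫ (1 + q_2(x)) S_2( r_2(x) ‖ r_1(x) ) dx, where for scalars 0 < a, b < 1, S_2(a‖b) := a(log a − log b) + (1−a)(log(1−a) − log(1−b)). -/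

import Mathlib

set_option maxHeartbeats 1000000


open MeasureTheory Filter Set

noncomputable section

/-- The cube `[0, 2π)^ν`. -/
def cube (ν : ℕ) : Set (Fin ν → ℝ) := Set.univ.pi fun _ => Set.Ico 0 (2 * Real.pi)

/-- `ψ(t) = −(2π)^{−ν} ∫ log[(1+q₁(x))^t (1+q₂(x))^{1−t} − q₁(x)^t q₂(x)^{1−t}] dx`. -/
def psiLimit {ν : ℕ} (q₁ q₂ : (Fin ν → ℝ) → ℝ) (t : ℝ) : ℝ :=
  -(((2 * Real.pi) ^ ν : ℝ)⁻¹ *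
    ∫ x in cube ν,
      Real.log ((1 + q₁ x) ^ t * (1 + q₂ x) ^ (1 - t) - (q₁ x) ^ t * (q₂ x) ^ (1 - t)))

/-- Scalar `S₂(a‖b) = a(log a − log b) + (1−a)(log(1−a) − log(1−b))` for `0 < a, b < 1`. -/
def S2s (a b : ℝ) : ℝ :=
  a * (Real.log a - Real.log b) + (1 - a) * (Real.log (1 - a) - Real.log (1 - b))

namespace PsiAux


/-- `G(a,b,t) = (1+a)^t (1+b)^{1-t} - a^t b^{1-t}`. -/
def Gf (a b t : ℝ) : ℝ := (1 + a) ^ t * (1 + b) ^ (1 - t) - a ^ t * b ^ (1 - t)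

/-- derivative of `Gf` in `t`. -/
def Gf' (a b t : ℝ) : ℝ :=
  (Real.log (1 + a) - Real.log (1 + b)) * ((1 + a) ^ t * (1 + b) ^ (1 - t))
    - (Real.log a - Real.log b) * (a ^ t * b ^ (1 - t))

lemma Gf_exp {a b : ℝ} (ha : 0 < a) (hb : 0 < b) (t : ℝ) :
    Gf a b t =
      Real.exp (Real.log (1 + a) * t + Real.log (1 + b) * (1 - t)) -
        Real.exp (Real.log a * t + Real.log b * (1 - t)) := by
  unfold Gf
  rw [Real.rpow_def_of_pos (by linarith : (0:ℝ) < 1 + a),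
    Real.rpow_def_of_pos (by linarith : (0:ℝ) < 1 + b),
    Real.rpow_def_of_pos ha, Real.rpow_def_of_pos hb, ← Real.exp_add, ← Real.exp_add]

lemma Gf'_exp {a b : ℝ} (ha : 0 < a) (hb : 0 < b) (t : ℝ) :
    Gf' a b t =
      (Real.log (1 + a) - Real.log (1 + b)) *
          Real.exp (Real.log (1 + a) * t + Real.log (1 + b) * (1 - t)) -
        (Real.log a - Real.log b) * Real.exp (Real.log a * t + Real.log b * (1 - t)) := by
  unfold Gf'
  rw [Real.rpow_def_of_pos (by linarith : (0:ℝ) < 1 + a),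
    Real.rpow_def_of_pos (by linarith : (0:ℝ) < 1 + b),
    Real.rpow_def_of_pos ha, Real.rpow_def_of_pos hb, ← Real.exp_add, ← Real.exp_add]

lemma hasDerivAt_Gf {a b : ℝ} (ha : 0 < a) (hb : 0 < b) (t : ℝ) :
    HasDerivAt (Gf a b) (Gf' a b t) t := by
  have h1a : (0:ℝ) < 1 + a := by linarith
  have h1b : (0:ℝ) < 1 + b := by linarith
  have hc : HasDerivAt (fun t : ℝ => 1 - t) (-1) t := by
    simpa using (hasDerivAt_id t).const_sub 1
  have d1 : HasDerivAt (fun t : ℝ => (1 + a) ^ t) ((1 + a) ^ t * Real.log (1 + a)) t :=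
    (Real.hasStrictDerivAt_const_rpow h1a t).hasDerivAt
  have d2 : HasDerivAt (fun t : ℝ => (1 + b) ^ (1 - t))
      ((1 + b) ^ (1 - t) * Real.log (1 + b) * (-1)) t :=
    ((Real.hasStrictDerivAt_const_rpow h1b (1 - t)).hasDerivAt.comp t hc)
  have d3 : HasDerivAt (fun t : ℝ => a ^ t) (a ^ t * Real.log a) t :=
    (Real.hasStrictDerivAt_const_rpow ha t).hasDerivAt
  have d4 : HasDerivAt (fun t : ℝ => b ^ (1 - t))
      (b ^ (1 - t) * Real.log b * (-1)) t :=
    ((Real.hasStrictDerivAt_const_rpow hb (1 - t)).hasDerivAt.comp t hc)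
  have := (d1.mul d2).sub (d3.mul d4)
  refine this.congr_deriv ?_
  unfold Gf'
  ring

lemma logdiff_anti {x y : ℝ} (hx : 0 < x) (hxy : x ≤ y) :
    Real.log (1 + y) - Real.log y ≤ Real.log (1 + x) - Real.log x := by
  have hy : 0 < y := lt_of_lt_of_le hx hxy
  rw [← Real.log_div (by linarith) (ne_of_gt hy), ← Real.log_div (by linarith) (ne_of_gt hx)]
  apply Real.log_le_log (by positivity)
  rw [div_le_div_iff₀ hy hx]
  nlinarith

/-- `ℓ`-constant. -/
def ell (M : ℝ) : ℝ := Real.log (1 + M) - Real.log M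

def Lc (η : ℝ) : ℝ := Real.log (1 + η) - Real.log η

def eps (η M : ℝ) : ℝ := min (1/2) (ell M / (2 * Lc η))

def Kb (η M : ℝ) : ℝ :=
  ((Real.log (1 + M) - Real.log (1 + η)) + (Real.log M - Real.log η)) /
    (1 - Real.exp (-(ell M) / 2))

lemma ell_pos {M : ℝ} (hM : 0 < M) : 0 < ell M :=
  sub_pos.2 (Real.log_lt_log hM (by linarith))

lemma ell_le_Lc {η M : ℝ} (hη : 0 < η) (hηM : η ≤ M) : ell M ≤ Lc η :=
  logdiff_anti hη hηM

lemma eps_pos {η M : ℝ} (hη : 0 < η) (hηM : η ≤ M) : 0 < eps η M := by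
  have h1 := ell_pos (lt_of_lt_of_le hη hηM)
  have h2 : 0 < Lc η := lt_of_lt_of_le h1 (ell_le_Lc hη hηM)
  exact lt_min (by norm_num) (by positivity)

lemma eps_mul_le {η M : ℝ} (hη : 0 < η) (hηM : η ≤ M) : eps η M * Lc η ≤ ell M / 2 := by
  have h1 := ell_pos (lt_of_lt_of_le hη hηM)
  have h2 : 0 < Lc η := lt_of_lt_of_le h1 (ell_le_Lc hη hηM)
  have : eps η M ≤ ell M / (2 * Lc η) := min_le_right _ _
  calc eps η M * Lc η ≤ ell M / (2 * Lc η) * Lc η :=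
        mul_le_mul_of_nonneg_right this h2.le
    _ = ell M / 2 := by field_simp

/-- The key positivity and bound estimates. -/
lemma bounds {η M : ℝ} (hη : 0 < η) (hηM : η ≤ M) {a b t : ℝ}
    (ha : a ∈ Icc η M) (hb : b ∈ Icc η M)
    (ht : t ∈ Icc (-(eps η M)) (1 + eps η M)) :
    0 < Gf a b t ∧ |Gf' a b t / Gf a b t| ≤ Kb η M := by
  obtain ⟨ha1, ha2⟩ := ha
  obtain ⟨hb1, hb2⟩ := hb
  obtain ⟨ht1, ht2⟩ := ht
  have ha0 : 0 < a := lt_of_lt_of_le hη ha1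
  have hb0 : 0 < b := lt_of_lt_of_le hη hb1
  have hM : 0 < M := lt_of_lt_of_le hη hηM
  have hℓ : 0 < ell M := ell_pos hM
  have hL : 0 < Lc η := lt_of_lt_of_le hℓ (ell_le_Lc hη hηM)
  set La := Real.log (1 + a) - Real.log a with hLa_def
  set Lb := Real.log (1 + b) - Real.log b with hLb_def
  have hLa1 : ell M ≤ La := logdiff_anti ha0 ha2
  have hLa2 : La ≤ Lc η := logdiff_anti hη ha1
  have hLb1 : ell M ≤ Lb := logdiff_anti hb0 hb2
  have hLb2 : Lb ≤ Lc η := logdiff_anti hη hb1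
  have hepsL : eps η M * Lc η ≤ ell M / 2 := eps_mul_le hη hηM
  have heps : 0 < eps η M := eps_pos hη hηM
  -- linear lower bound
  have hlin : ell M / 2 ≤ t * La + (1 - t) * Lb := by
    rcases le_total 0 t with h0 | h0
    · rcases le_total t 1 with h1 | h1
      · have e1 : t * ell M ≤ t * La := mul_le_mul_of_nonneg_left hLa1 h0
        have e2 : (1 - t) * ell M ≤ (1 - t) * Lb :=
          mul_le_mul_of_nonneg_left hLb1 (by linarith)
        nlinarith
      · have e1 : ell M ≤ t * La :=
          le_trans hLa1 (le_mul_of_one_le_left (by linarith) h1)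
        have e2 : (1 - t) * Lc η ≤ (1 - t) * Lb :=
          mul_le_mul_of_nonpos_left hLb2 (by linarith)
        have e3 : (-(eps η M)) * Lc η ≤ (1 - t) * Lc η :=
          mul_le_mul_of_nonneg_right (by linarith) hL.le
        nlinarith
    · have e1 : ell M ≤ (1 - t) * Lb :=
        le_trans hLb1 (le_mul_of_one_le_left (by linarith) (by linarith))
      have e2 : t * Lc η ≤ t * La := mul_le_mul_of_nonpos_left hLa2 h0
      have e3 : (-(eps η M)) * Lc η ≤ t * Lc η := mul_le_mul_of_nonneg_right (by linarith) hL.le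
      nlinarith
  set P := Real.log (1 + a) * t + Real.log (1 + b) * (1 - t) with hP_def
  set Q := Real.log a * t + Real.log b * (1 - t) with hQ_def
  have hPQ : ell M / 2 ≤ P - Q := by
    have e : P - Q = t * La + (1 - t) * Lb := by
      rw [hP_def, hQ_def, hLa_def, hLb_def]; ring
    linarith
  have hQP : Real.exp Q ≤ Real.exp P * Real.exp (-(ell M) / 2) := by
    rw [← Real.exp_add]
    exact Real.exp_le_exp.2 (by linarith)
  have hd : Real.exp (-(ell M) / 2) < 1 := by
    rw [Real.exp_lt_one_iff]; linarith
  have hGlow : Real.exp P * (1 - Real.exp (-(ell M) / 2)) ≤ Gf a b t := by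
    rw [Gf_exp ha0 hb0]
    have := hQP
    nlinarith [Real.exp_pos P]
  have hGpos : 0 < Gf a b t :=
    lt_of_lt_of_le (mul_pos (Real.exp_pos P) (by linarith)) hGlow
  refine ⟨hGpos, ?_⟩
  -- bounds on logs
  have f1 : Real.log (1 + a) ≤ Real.log (1 + M) := Real.log_le_log (by linarith) (by linarith)
  have f2 : Real.log (1 + b) ≤ Real.log (1 + M) := Real.log_le_log (by linarith) (by linarith)
  have f3 : Real.log (1 + η) ≤ Real.log (1 + a) := Real.log_le_log (by linarith) (by linarith)
  have f4 : Real.log (1 + η) ≤ Real.log (1 + b) := Real.log_le_log (by linarith) (by linarith)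
  have g1 : Real.log a ≤ Real.log M := Real.log_le_log ha0 ha2
  have g2 : Real.log b ≤ Real.log M := Real.log_le_log hb0 hb2
  have g3 : Real.log η ≤ Real.log a := Real.log_le_log hη ha1
  have g4 : Real.log η ≤ Real.log b := Real.log_le_log hη hb1
  have l1 : |Real.log (1 + a) - Real.log (1 + b)| ≤ Real.log (1 + M) - Real.log (1 + η) := by
    rw [abs_le]; constructor <;> linarith
  have l2 : |Real.log a - Real.log b| ≤ Real.log M - Real.log η := by
    rw [abs_le]; constructor <;> linarith
  set C := (Real.log (1 + M) - Real.log (1 + η)) + (Real.log M - Real.log η) with hC_def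
  have hC0 : 0 ≤ C := by
    have := abs_nonneg (Real.log (1 + a) - Real.log (1 + b))
    have := abs_nonneg (Real.log a - Real.log b)
    linarith
  have hnum : |Gf' a b t| ≤ C * Real.exp P := by
    rw [Gf'_exp ha0 hb0]
    have e0 : Real.exp Q ≤ Real.exp P := Real.exp_le_exp.2 (by linarith)
    calc |(Real.log (1 + a) - Real.log (1 + b)) * Real.exp P -
            (Real.log a - Real.log b) * Real.exp Q|
        ≤ |(Real.log (1 + a) - Real.log (1 + b)) * Real.exp P| +
            |(Real.log a - Real.log b) * Real.exp Q| := abs_sub _ _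
      _ = |Real.log (1 + a) - Real.log (1 + b)| * Real.exp P +
            |Real.log a - Real.log b| * Real.exp Q := by
          rw [abs_mul, abs_mul, abs_of_pos (Real.exp_pos P), abs_of_pos (Real.exp_pos Q)]
      _ ≤ (Real.log (1 + M) - Real.log (1 + η)) * Real.exp P +
            (Real.log M - Real.log η) * Real.exp Q :=
          add_le_add (mul_le_mul_of_nonneg_right l1 (Real.exp_pos P).le)
            (mul_le_mul_of_nonneg_right l2 (Real.exp_pos Q).le)
      _ ≤ (Real.log (1 + M) - Real.log (1 + η)) * Real.exp P +
            (Real.log M - Real.log η) * Real.exp P := by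
          have h2 : 0 ≤ Real.log M - Real.log η := by linarith
          have := mul_le_mul_of_nonneg_left e0 h2
          linarith
      _ = C * Real.exp P := by rw [hC_def]; ring
  rw [abs_div, abs_of_pos hGpos]
  unfold Kb
  calc |Gf' a b t| / Gf a b t
      ≤ (C * Real.exp P) / (Real.exp P * (1 - Real.exp (-(ell M) / 2))) :=
        div_le_div₀ (mul_nonneg hC0 (Real.exp_pos P).le) hnum (mul_pos (Real.exp_pos P) (by linarith)) hGlow
    _ = C / (1 - Real.exp (-(ell M) / 2)) := by
        rw [mul_comm (Real.exp P)]
        exact mul_div_mul_right _ _ (Real.exp_ne_zero P)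
  

lemma Gf_one (a b : ℝ) : Gf a b 1 = 1 := by
  unfold Gf; norm_num

lemma Gf'_one (a b : ℝ) :
    Gf' a b 1 = (Real.log (1 + a) - Real.log (1 + b)) * (1 + a)
      - (Real.log a - Real.log b) * a := by
  unfold Gf'; norm_num

lemma pt1 {a b : ℝ} (ha : 0 < a) (hb : 0 < b) :
    Gf' a b 1 / Gf a b 1 = -((1 + a) * S2s (a / (1 + a)) (b / (1 + b))) := by
  have h1a : (0:ℝ) < 1 + a := by linarith
  have h1b : (0:ℝ) < 1 + b := by linarith
  rw [Gf_one, Gf'_one, div_one]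
  unfold S2s
  rw [show (1 : ℝ) - a / (1 + a) = 1 / (1 + a) by field_simp; ring,
    show (1 : ℝ) - b / (1 + b) = 1 / (1 + b) by field_simp; ring,
    Real.log_div (ne_of_gt ha) (ne_of_gt h1a),
    Real.log_div (ne_of_gt hb) (ne_of_gt h1b),
    Real.log_div one_ne_zero (ne_of_gt h1a),
    Real.log_div one_ne_zero (ne_of_gt h1b), Real.log_one]
  field_simp
  ring

lemma psiLimit_swap {ν : ℕ} (q₁ q₂ : (Fin ν → ℝ) → ℝ) (t : ℝ) :
    psiLimit q₁ q₂ t = psiLimit q₂ q₁ (1 - t) := by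
  unfold psiLimit
  congr 2
  apply integral_congr_ae
  refine Eventually.of_forall fun x => ?_
  rw [show (1 : ℝ) - (1 - t) = t from by ring]
  congr 1
  ring

lemma key {ν : ℕ} (q₁ q₂ : (Fin ν → ℝ) → ℝ) (η M : ℝ) (hη : 0 < η) (hηM : η ≤ M)
    (hmeas₁ : Measurable q₁) (hmeas₂ : Measurable q₂)
    (hq₁ : ∀ᵐ x ∂(volume.restrict (cube ν)), q₁ x ∈ Set.Icc η M)
    (hq₂ : ∀ᵐ x ∂(volume.restrict (cube ν)), q₂ x ∈ Set.Icc η M) :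
    HasDerivAt (psiLimit q₁ q₂)
      (((2 * Real.pi) ^ ν : ℝ)⁻¹ *
        ∫ x in cube ν, (1 + q₁ x) * S2s (q₁ x / (1 + q₁ x)) (q₂ x / (1 + q₂ x))) 1 := by
  have heps := eps_pos hη hηM
  have hfin : volume (cube ν) < ⊤ := by
    rw [cube, volume_pi_pi]
    simp only [Real.volume_Ico, Finset.prod_const, Finset.card_univ, Fintype.card_fin]
    exact ENNReal.pow_lt_top ENNReal.ofReal_lt_top
  have hae : ∀ᵐ x ∂(volume.restrict (cube ν)), q₁ x ∈ Icc η M ∧ q₂ x ∈ Icc η M := hq₁.and hq₂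
  have hpos : ∀ {x : Fin ν → ℝ}, q₁ x ∈ Icc η M ∧ q₂ x ∈ Icc η M →
      0 < q₁ x ∧ 0 < q₂ x :=
    fun hx => ⟨lt_of_lt_of_le hη hx.1.1, lt_of_lt_of_le hη hx.2.1⟩
  -- measurable surrogates
  have m1 : Measurable fun x => Real.log (1 + q₁ x) :=
    Real.measurable_log.comp (measurable_const.add hmeas₁)
  have m2 : Measurable fun x => Real.log (1 + q₂ x) :=
    Real.measurable_log.comp (measurable_const.add hmeas₂)
  have m3 : Measurable fun x => Real.log (q₁ x) := Real.measurable_log.comp hmeas₁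
  have m4 : Measurable fun x => Real.log (q₂ x) := Real.measurable_log.comp hmeas₂
  have mE1 : ∀ t : ℝ, Measurable fun x =>
      Real.exp (Real.log (1 + q₁ x) * t + Real.log (1 + q₂ x) * (1 - t)) := fun t =>
    Real.measurable_exp.comp ((m1.mul_const t).add (m2.mul_const (1 - t)))
  have mE2 : ∀ t : ℝ, Measurable fun x =>
      Real.exp (Real.log (q₁ x) * t + Real.log (q₂ x) * (1 - t)) := fun t =>
    Real.measurable_exp.comp ((m3.mul_const t).add (m4.mul_const (1 - t)))
  have hFmeas : ∀ t : ℝ,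
      AEStronglyMeasurable (fun x => Real.log (Gf (q₁ x) (q₂ x) t))
        (volume.restrict (cube ν)) := by
    intro t
    refine (((Real.measurable_log.comp ((mE1 t).sub (mE2 t))).aestronglyMeasurable).congr ?_)
    refine hae.mono fun x hx => ?_
    obtain ⟨h1, h2⟩ := hpos hx
    simp only [Function.comp, Pi.sub_apply]
    rw [← Gf_exp h1 h2]
  have hF'meas :
      AEStronglyMeasurable (fun x => Gf' (q₁ x) (q₂ x) 1 / Gf (q₁ x) (q₂ x) 1)
        (volume.restrict (cube ν)) := by
    refine ((((((m1.sub m2).mul (mE1 1)).sub ((m3.sub m4).mul (mE2 1))).div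
      ((mE1 1).sub (mE2 1))).aestronglyMeasurable).congr ?_)
    refine hae.mono fun x hx => ?_
    obtain ⟨h1, h2⟩ := hpos hx
    simp only [Pi.div_apply, Pi.sub_apply, Pi.mul_apply]
    rw [← Gf_exp h1 h2, ← Gf'_exp h1 h2]
  have hFint : Integrable (fun x => Real.log (Gf (q₁ x) (q₂ x) 1))
      (volume.restrict (cube ν)) := by
    have : (fun x : Fin ν → ℝ => Real.log (Gf (q₁ x) (q₂ x) 1)) = fun _ => 0 := by
      funext x; rw [Gf_one, Real.log_one]
    rw [this]
    exact integrable_zero _ _ _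
  have hbound : ∀ᵐ x ∂(volume.restrict (cube ν)), ∀ t ∈ Metric.ball (1 : ℝ) (eps η M),
      ‖Gf' (q₁ x) (q₂ x) t / Gf (q₁ x) (q₂ x) t‖ ≤ Kb η M := by
    refine hae.mono fun x hx t ht => ?_
    rw [Metric.mem_ball, Real.dist_eq] at ht
    have ht' := abs_lt.1 ht
    have htI : t ∈ Icc (-(eps η M)) (1 + eps η M) := ⟨by linarith, by linarith⟩
    rw [Real.norm_eq_abs]
    exact (bounds hη hηM hx.1 hx.2 htI).2
  have hboundint : Integrable (fun _ : Fin ν → ℝ => Kb η M) (volume.restrict (cube ν)) :=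
    integrableOn_const hfin.ne
  have hdiff : ∀ᵐ x ∂(volume.restrict (cube ν)), ∀ t ∈ Metric.ball (1 : ℝ) (eps η M),
      HasDerivAt (fun t => Real.log (Gf (q₁ x) (q₂ x) t))
        (Gf' (q₁ x) (q₂ x) t / Gf (q₁ x) (q₂ x) t) t := by
    refine hae.mono fun x hx t ht => ?_
    obtain ⟨h1, h2⟩ := hpos hx
    rw [Metric.mem_ball, Real.dist_eq] at ht
    have ht' := abs_lt.1 ht
    have htI : t ∈ Icc (-(eps η M)) (1 + eps η M) := ⟨by linarith, by linarith⟩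
    exact (hasDerivAt_Gf h1 h2 t).log (ne_of_gt (bounds hη hηM hx.1 hx.2 htI).1)
  obtain ⟨-, hD⟩ := hasDerivAt_integral_of_dominated_loc_of_deriv_le
    (F := fun t x => Real.log (Gf (q₁ x) (q₂ x) t))
    (F' := fun t x => Gf' (q₁ x) (q₂ x) t / Gf (q₁ x) (q₂ x) t)
    (x₀ := (1 : ℝ)) (bound := fun _ => Kb η M) (μ := volume.restrict (cube ν)) (Metric.ball_mem_nhds 1 heps)
    (Eventually.of_forall hFmeas) hFint hF'meas hbound hboundint hdiff
  have hval : (∫ x in cube ν, Gf' (q₁ x) (q₂ x) 1 / Gf (q₁ x) (q₂ x) 1) =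
      -∫ x in cube ν, (1 + q₁ x) * S2s (q₁ x / (1 + q₁ x)) (q₂ x / (1 + q₂ x)) := by
    rw [← integral_neg]
    refine integral_congr_ae (hae.mono fun x hx => ?_)
    obtain ⟨h1, h2⟩ := hpos hx
    exact pt1 h1 h2
  have hmain := (hD.const_mul (((2 * Real.pi) ^ ν : ℝ)⁻¹)).neg
  rw [show ((2 * Real.pi) ^ ν : ℝ)⁻¹ *
      (∫ x in cube ν, (1 + q₁ x) * S2s (q₁ x / (1 + q₁ x)) (q₂ x / (1 + q₂ x))) =
      -(((2 * Real.pi) ^ ν : ℝ)⁻¹ *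
        ∫ x in cube ν, Gf' (q₁ x) (q₂ x) 1 / Gf (q₁ x) (q₂ x) 1) from by rw [hval]; ring]
  exact hmain

end PsiAux

/-- **One-sided derivatives of ψ at the endpoints.**  With `r_k = q_k/(1+q_k)`:
`∂⁻ψ(1) = (2π)^{−ν} ∫ (1+q₁(x)) S₂(r₁(x)‖r₂(x)) dx` and
`∂⁺ψ(0) = −(2π)^{−ν} ∫ (1+q₂(x)) S₂(r₂(x)‖r₁(x)) dx`. -/
theorem psiLimit_one_sided_derivatives {ν : ℕ} (hν : 1 ≤ ν)
    (q₁ q₂ : (Fin ν → ℝ) → ℝ) (η M : ℝ) (hη : 0 < η) (hηM : η ≤ M)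
    (hmeas₁ : Measurable q₁) (hmeas₂ : Measurable q₂)
    (hq₁ : ∀ᵐ x ∂(volume.restrict (cube ν)), q₁ x ∈ Set.Icc η M)
    (hq₂ : ∀ᵐ x ∂(volume.restrict (cube ν)), q₂ x ∈ Set.Icc η M) :
    HasDerivWithinAt (psiLimit q₁ q₂)
        (((2 * Real.pi) ^ ν : ℝ)⁻¹ *
          ∫ x in cube ν,
            (1 + q₁ x) * S2s (q₁ x / (1 + q₁ x)) (q₂ x / (1 + q₂ x)))
        (Set.Iic 1) 1 ∧
      HasDerivWithinAt (psiLimit q₁ q₂)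
        (-(((2 * Real.pi) ^ ν : ℝ)⁻¹ *
          ∫ x in cube ν,
            (1 + q₂ x) * S2s (q₂ x / (1 + q₂ x)) (q₁ x / (1 + q₁ x))))
        (Set.Ici 0) 0 := by
  constructor
  · exact (PsiAux.key q₁ q₂ η M hη hηM hmeas₁ hmeas₂ hq₁ hq₂).hasDerivWithinAt
  · have h1 := PsiAux.key q₂ q₁ η M hη hηM hmeas₂ hmeas₁ hq₂ hq₁
    have hc : HasDerivAt (fun t : ℝ => 1 - t) (-1) 0 := by
      simpa using (hasDerivAt_id (0 : ℝ)).const_sub 1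
    have h1' : HasDerivAt (psiLimit q₂ q₁)
        (((2 * Real.pi) ^ ν : ℝ)⁻¹ *
          ∫ x in cube ν, (1 + q₂ x) * S2s (q₂ x / (1 + q₂ x)) (q₁ x / (1 + q₁ x)))
        ((fun t : ℝ => 1 - t) 0) := by
      simpa using h1
    have h2 := h1'.comp 0 hc
    have hfun : (psiLimit q₂ q₁ ∘ fun t : ℝ => 1 - t) = psiLimit q₁ q₂ :=
      funext fun t => (PsiAux.psiLimit_swap q₁ q₂ t).symm
    rw [hfun] at h2
    have := h2.hasDerivWithinAt (s := Set.Ici (0:ℝ))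
    refine this.congr_deriv ?_
    ring


end
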